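/- If z_1, ..., z_n are complex numbers with |arg(z_i)| ≤ θ < π/2 for all i, then |z_1 ⋯ z_n|^{1/n} ≤ (1/(n cos θ)) |z_1 + ⋯ + z_n|. -/

import Mathlib

open Real Complex

theorem generalized_am_gm_complex (n : ℕ) (hn : 0 < n) (θ : ℝ) (hθ₀ : 0 ≤ θ)
    (hθ : θ < π / 2) (z : Fin n → ℂ) (h : ∀ i, |(z i).arg| ≤ θ) :
    (‖∏ i, z i‖) ^ ((n : ℝ)⁻¹) ≤
      (1 / (n * Real.cos θ)) * ‖∑ i, z i‖ := by
  have hcos : 0 < Real.cos θ := Real.cos_pos_of_mem_Ioo ⟨by linarith [Real.pi_pos], hθ⟩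
  have hnR : (0:ℝ) < n := by exact_mod_cast hn
  -- Re(z i) ≥ cos θ * |z i|
  have hre : ∀ i, Real.cos θ * ‖z i‖ ≤ (z i).re := by
    intro i
    rcases eq_or_ne (z i) 0 with h0 | h0
    · simp [h0]
    · have harg := Complex.cos_arg h0
      have hlt : |(z i).arg| < π / 2 := lt_of_le_of_lt (h i) hθ
      have hc : Real.cos θ ≤ Real.cos (z i).arg := by
        rw [← Real.cos_abs (z i).arg]
        apply Real.cos_le_cos_of_nonneg_of_le_pi (abs_nonneg _) (by linarith [Real.pi_pos]) (h i)
      have := mul_le_mul_of_nonneg_right hc (norm_nonneg (z i))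
      calc Real.cos θ * ‖z i‖ ≤ Real.cos (z i).arg * ‖z i‖ := this
        _ = (z i).re := by rw [harg, div_mul_cancel₀ _ (norm_ne_zero_iff.mpr h0)]
  -- AM-GM
  have hamgm : (‖∏ i, z i‖) ^ ((n : ℝ)⁻¹) ≤
      (n : ℝ)⁻¹ * ∑ i, ‖z i‖ := by
    have h1 : (‖∏ i, z i‖) ^ ((n : ℝ)⁻¹)
        = ∏ i, (‖z i‖) ^ ((n : ℝ)⁻¹) := by
      rw [norm_prod, ← Real.finset_prod_rpow]
      intro i _; exact norm_nonneg _
    rw [h1]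
    have := Real.geom_mean_le_arith_mean_weighted Finset.univ (fun _ => (n:ℝ)⁻¹)
      (fun i => ‖z i‖) (fun i _ => by positivity)
      (by simp [Finset.card_univ]; field_simp)
      (fun i _ => norm_nonneg _)
    simpa [Finset.mul_sum] using this
  have hsum : Real.cos θ * ∑ i, ‖z i‖ ≤ ‖∑ i, z i‖ := by
    calc Real.cos θ * ∑ i, ‖z i‖ = ∑ i, Real.cos θ * ‖z i‖ := by
          rw [Finset.mul_sum]
      _ ≤ ∑ i, (z i).re := Finset.sum_le_sum (fun i _ => hre i)
      _ = (∑ i, z i).re := by rw [Complex.re_sum]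
      _ ≤ ‖∑ i, z i‖ := Complex.re_le_norm _
  calc (‖∏ i, z i‖) ^ ((n : ℝ)⁻¹) ≤ (n : ℝ)⁻¹ * ∑ i, ‖z i‖ := hamgm
    _ = (1 / (n * Real.cos θ)) * (Real.cos θ * ∑ i, ‖z i‖) := by
        field_simp
    _ ≤ (1 / (n * Real.cos θ)) * ‖∑ i, z i‖ := by
        apply mul_le_mul_of_nonneg_left hsum
        positivity
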